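/- Let n ≥ 1 and let Y_n be a minimizer of the quantization energy among subsets of Q with n points. Then for every y ∈ Y_n, the Voronoi cell V of y satisfies |V| ≥ ω₃·Γ₅³·n^{−1}, where Γ₅ := (1/4)·(√(1 + 2⁴·3³/(5²·10³)) − 1)·Γ₃, Γ₃ := ω₃^{−1/5}·Γ₁^{1/5}, and Γ₁ := (2/5)^{2/3}/40. -/

import Mathlib

open MeasureTheory

noncomputable section

/-- Euclidean 3-space. -/
abbrev E3 := EuclideanSpace ℝ (Fin 3)

/-- The closed unit cube Q = [0,1]³. -/
def Qcube : Set E3 := {x | ∀ i, x i ∈ Set.Icc (0 : ℝ) 1}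

/-- The quantization energy E(Y) = ∫_Q dist(x,Y)² dx. -/
def quantE (Y : Finset E3) : ℝ := ∫ x in Qcube, (Metric.infDist x (↑Y : Set E3)) ^ 2

/-- The Voronoi cell of a generator y ∈ Y, relative to Q. -/
def vorCell (Y : Finset E3) (y : E3) : Set E3 :=
  {x ∈ Qcube | ∀ z ∈ Y, dist x y ≤ dist x z}

/-- Y is a minimizer of the quantization energy among n-point subsets of Q. -/
def IsMinimizer (n : ℕ) (Y : Finset E3) : Prop :=
  (↑Y : Set E3) ⊆ Qcube ∧ Y.card = n ∧
    ∀ Z : Finset E3, (↑Z : Set E3) ⊆ Qcube → Z.card = n → quantE Y ≤ quantE Z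

/-- ω₃ = 4π/3, the volume of the unit ball in ℝ³. -/
def omega3 : ℝ := 4 * Real.pi / 3

/-- Γ₁ = (2/5)^{2/3} / 40. -/
def Gamma1 : ℝ := ((2 / 5 : ℝ) ^ ((2 : ℝ) / 3)) / 40

/-- Γ₃ = ω₃^{-1/5} Γ₁^{1/5}. -/
def Gamma3 : ℝ := omega3 ^ (-(1 : ℝ) / 5) * Gamma1 ^ ((1 : ℝ) / 5)

/-- Γ₅ = (1/4)(√(1 + 2⁴·3³/(5²·10³)) − 1) Γ₃. -/
def Gamma5 : ℝ :=
  (1 / 4) * (Real.sqrt (1 + (2 ^ 4 * 3 ^ 3 : ℝ) / (5 ^ 2 * 10 ^ 3)) - 1) * Gamma3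

/-- Γ₄, the diameter upper-bound constant. -/
def Gamma4 : ℝ :=
  (2 * (12 : ℝ) ^ ((1 : ℝ) / 4) * (16 : ℝ) ^ ((1 : ℝ) / 3) /
      (Real.pi ^ ((1 : ℝ) / 4) * omega3 ^ ((1 : ℝ) / 12))) *
    (Real.sqrt (1 + (2 ^ 4 * 3 ^ 3 : ℝ) / (5 ^ 2 * 10 ^ 3)) - 1) ^ (-(1 : ℝ) / 2) *
    ((5 ^ 2 * 10 ^ 3 : ℝ) / (2 ^ 2 * 3 ^ 3)) ^ ((1 : ℝ) / 4)

open Metric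

local instance : DecidableEq E3 := Classical.decEq _


lemma volume_box (lo : Fin 3 → ℝ) (a : ℝ) (ha : 0 ≤ a) :
    volume {x : E3 | ∀ i, x i ∈ Set.Icc (lo i) (lo i + a)} = ENNReal.ofReal (a ^ 3) := by
  have hmp := EuclideanSpace.volume_preserving_symm_measurableEquiv_toLp (Fin 3)
  have hset : {x : E3 | ∀ i, x i ∈ Set.Icc (lo i) (lo i + a)}
      = (MeasurableEquiv.toLp 2 (Fin 3 → ℝ)).symm ⁻¹' (Set.univ.pi fun i => Set.Icc (lo i) (lo i + a)) := by
    ext x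
    simp only [Set.mem_preimage, Set.mem_pi, Set.mem_univ, forall_true_left, Set.mem_setOf_eq]
    rfl
  rw [hset, hmp.measure_preimage
    (MeasurableSet.univ_pi fun i => measurableSet_Icc).nullMeasurableSet, volume_pi_pi]
  simp only [Real.volume_Icc, add_sub_cancel_left]
  rw [Finset.prod_const, ← ENNReal.ofReal_pow ha]
  norm_num

lemma volume_Qcube : volume Qcube = 1 := by
  have h : Qcube = {x : E3 | ∀ i, x i ∈ Set.Icc ((fun _ => (0:ℝ)) i) ((fun _ => (0:ℝ)) i + 1)} := by
    ext x; simp [Qcube]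
  rw [h, volume_box _ 1 zero_le_one]
  norm_num

lemma isClosed_Qcube : IsClosed Qcube := by
  have h : Qcube = ⋂ i, (fun x : E3 => x i) ⁻¹' (Set.Icc 0 1) := by ext x; simp [Qcube]
  rw [h]
  exact isClosed_iInter fun i => (isClosed_Icc).preimage (EuclideanSpace.proj i).continuous

lemma dist_coord_le (x y : E3) (i : Fin 3) : dist (x i) (y i) ≤ dist x y := by
  rw [EuclideanSpace.dist_eq, show dist (x i) (y i) = √(dist (x i) (y i) ^ 2) from
    (Real.sqrt_sq dist_nonneg).symm]
  apply Real.sqrt_le_sqrt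
  exact Finset.single_le_sum (f := fun j => dist (x j) (y j) ^ 2) (fun j _ => sq_nonneg _)
    (Finset.mem_univ i)

lemma dist_le_sqrt3 {x y : E3} (hx : x ∈ Qcube) (hy : y ∈ Qcube) : dist x y ≤ √3 := by
  rw [EuclideanSpace.dist_eq]
  apply Real.sqrt_le_sqrt
  have : ∀ i, dist (x i) (y i) ^ 2 ≤ 1 := by
    intro i
    have h1 := (hx i).1; have h2 := (hx i).2; have h3 := (hy i).1; have h4 := (hy i).2
    rw [Real.dist_eq, sq_abs]
    nlinarith
  calc ∑ i, dist (x i) (y i) ^ 2 ≤ ∑ _i : Fin 3, (1:ℝ) := Finset.sum_le_sum fun i _ => this i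
  _ = 3 := by norm_num

lemma isCompact_Qcube : IsCompact Qcube := by
  apply isCompact_of_isClosed_isBounded isClosed_Qcube
  rw [Metric.isBounded_iff]
  exact ⟨√3, fun x hx y hy => dist_le_sqrt3 hx hy⟩


lemma exists_nearest (W : Finset E3) (hW : W.Nonempty) (x : E3) :
    ∃ z ∈ W, infDist x (↑W : Set E3) = dist x z := by
  obtain ⟨z, hz, he⟩ := (W.finite_toSet.isCompact).exists_infDist_eq_dist
    (by exact_mod_cast hW.to_set) x
  exact ⟨z, by exact_mod_cast hz, he⟩

lemma le_infDist_finset {W : Finset E3} (hW : W.Nonempty) {x : E3} {b : ℝ}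
    (H : ∀ z ∈ W, b ≤ dist x z) : b ≤ infDist x (↑W : Set E3) := by
  obtain ⟨z, hz, he⟩ := exists_nearest W hW x
  rw [he]; exact H z hz

lemma measurableSet_Qcube : MeasurableSet Qcube :=
  isCompact_Qcube.isClosed.measurableSet

lemma integrableOn_infDistSq (s : Set E3) :
    IntegrableOn (fun x => infDist x s ^ 2) Qcube volume :=
  (((continuous_infDist_pt s).pow 2).continuousOn).integrableOn_compact isCompact_Qcube

lemma isClosed_vorCell (Y : Finset E3) (y : E3) : IsClosed (vorCell Y y) := by
  have h : vorCell Y y = Qcube ∩ ⋂ z ∈ Y, {x : E3 | dist x y ≤ dist x z} := by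
    ext x; simp [vorCell, Set.mem_iInter]
  rw [h]
  exact isCompact_Qcube.isClosed.inter <| isClosed_biInter fun z _ =>
    isClosed_le (Continuous.dist continuous_id continuous_const)
      (Continuous.dist continuous_id continuous_const)

lemma vorCell_subset (Y : Finset E3) (y : E3) : vorCell Y y ⊆ Qcube := fun _ hx => hx.1

lemma infDist_eq_on_cell {Y : Finset E3} {y : E3} (hy : y ∈ Y) {x : E3}
    (hx : x ∈ vorCell Y y) : infDist x (↑Y : Set E3) = dist x y := by
  refine le_antisymm (infDist_le_dist_of_mem (by exact_mod_cast hy)) ?_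
  exact le_infDist_finset ⟨y, hy⟩ fun z hz => hx.2 z hz

lemma erase_nonempty {Y : Finset E3} {y : E3} (h2 : 2 ≤ Y.card) (hy : y ∈ Y) :
    (Y.erase y).Nonempty := by
  rw [← Finset.card_pos, Finset.card_erase_of_mem hy]; omega

lemma infDist_erase_eq {Y : Finset E3} {y : E3} (hy : y ∈ Y) (h2 : 2 ≤ Y.card) {x : E3}
    (hxQ : x ∈ Qcube) (hx : x ∉ vorCell Y y) :
    infDist x (↑(Y.erase y) : Set E3) = infDist x (↑Y : Set E3) := by
  have hne := erase_nonempty h2 hy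
  refine le_antisymm ?_ (infDist_le_infDist_of_subset
    (by exact_mod_cast Finset.coe_subset.2 (Finset.erase_subset y Y))
    (by exact_mod_cast hne.to_set))
  obtain ⟨z, hz, hdz⟩ := exists_nearest Y ⟨y, hy⟩ x
  rcases eq_or_ne z y with rfl | hzy
  · simp only [vorCell, Set.mem_setOf_eq, not_and, not_forall] at hx
    obtain ⟨w, hw, hww⟩ := hx hxQ
    push_neg at hww
    have hwe : w ∈ Y.erase z := Finset.mem_erase.2
      ⟨by rintro rfl; exact absurd le_rfl (not_le.2 hww), hw⟩
    calc infDist x (↑(Y.erase z) : Set E3) ≤ dist x w :=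
          infDist_le_dist_of_mem (by exact_mod_cast hwe)
    _ ≤ dist x z := le_of_lt hww
    _ = infDist x ↑Y := hdz.symm
  · exact hdz ▸ infDist_le_dist_of_mem (by exact_mod_cast Finset.mem_erase.2 ⟨hzy, hz⟩)


-- volume of a set S ⊆ Qcube is finite; helper for toReal and indicator integrals
lemma volume_le_one {S : Set E3} (hS : S ⊆ Qcube) : volume S ≤ 1 :=
  volume_Qcube ▸ measure_mono hS

-- indicator integral
lemma integral_indicator_cell (S : Set E3) (hSm : MeasurableSet S) (hS : S ⊆ Qcube) (c : ℝ) :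
    ∫ x in Qcube, S.indicator (fun _ => c) x = c * (volume S).toReal := by
  rw [MeasureTheory.integral_indicator hSm]
  rw [MeasureTheory.setIntegral_const]
  rw [measureReal_restrict_apply hSm, Set.inter_eq_self_of_subset_left hS, smul_eq_mul, measureReal_def]
  ring

lemma integrableOn_indicator_cell (S : Set E3) (hSm : MeasurableSet S) (c : ℝ) :
    IntegrableOn (S.indicator (fun _ => c)) Qcube volume := by
  apply Integrable.indicator _ hSm
  exact integrableOn_const (lt_of_le_of_lt (volume_le_one (le_refl _)) (by norm_num)).ne

-- Lemma B : increase bound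
lemma quantE_erase_le {Y : Finset E3} {y : E3} (hy : y ∈ Y) (h2 : 2 ≤ Y.card) {M : ℝ}
    (hM : ∀ x ∈ vorCell Y y, infDist x (↑(Y.erase y) : Set E3) ≤ M) :
    quantE (Y.erase y) ≤ quantE Y + M ^ 2 * (volume (vorCell Y y)).toReal := by
  have hVm := (isClosed_vorCell Y y).measurableSet
  have key : ∀ x ∈ Qcube, infDist x (↑(Y.erase y) : Set E3) ^ 2 ≤
      infDist x (↑Y : Set E3) ^ 2 + (vorCell Y y).indicator (fun _ => M ^ 2) x := by
    intro x hxQ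
    by_cases hx : x ∈ vorCell Y y
    · rw [Set.indicator_of_mem hx]
      have h1 : infDist x (↑(Y.erase y) : Set E3) ^ 2 ≤ M ^ 2 :=
        pow_le_pow_left₀ infDist_nonneg (hM x hx) 2
      nlinarith [sq_nonneg (infDist x (↑Y : Set E3)), infDist_nonneg (s := (↑Y : Set E3)) (x := x)]
    · rw [Set.indicator_of_notMem hx, infDist_erase_eq hy h2 hxQ hx]; simp
  have h := MeasureTheory.setIntegral_mono_on (integrableOn_infDistSq _)
    ((integrableOn_infDistSq (↑Y : Set E3)).add (integrableOn_indicator_cell _ hVm (M^2)))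
    measurableSet_Qcube key
  simp only [Pi.add_apply] at h
  rw [MeasureTheory.integral_add (integrableOn_infDistSq _) (integrableOn_indicator_cell _ hVm (M^2)),
    integral_indicator_cell _ hVm (vorCell_subset Y y)] at h
  exact h

-- the inward box at w
def boxAt (w : E3) (a : ℝ) : Set E3 :=
  {x : E3 | ∀ i, x i ∈ Set.Icc ((if w i ≤ 1/2 then w i else w i - a)) ((if w i ≤ 1/2 then w i else w i - a) + a)}

lemma volume_boxAt (w : E3) {a : ℝ} (ha : 0 ≤ a) : volume (boxAt w a) = ENNReal.ofReal (a ^ 3) :=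
  volume_box _ a ha

lemma isClosed_boxAt (w : E3) (a : ℝ) : IsClosed (boxAt w a) := by
  have h : boxAt w a = ⋂ i, (fun x : E3 => x i) ⁻¹'
      (Set.Icc ((if w i ≤ 1/2 then w i else w i - a)) ((if w i ≤ 1/2 then w i else w i - a) + a)) := by
    ext x; simp [boxAt, Set.mem_iInter]
  rw [h]
  exact isClosed_iInter fun i => (isClosed_Icc).preimage (EuclideanSpace.proj i).continuous

lemma boxAt_subset {w : E3} (hw : w ∈ Qcube) {a : ℝ} (ha : 0 ≤ a) (ha2 : a ≤ 1/2) :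
    boxAt w a ⊆ Qcube := by
  intro x hx i
  have h := hx i
  have h1 := (hw i).1; have h2 := (hw i).2
  by_cases hc : w i ≤ 1/2 <;> simp only [hc, if_true, if_false] at h <;>
    constructor <;> [skip; skip; skip; skip] <;> cases' h with hA hB <;> linarith

lemma boxAt_dist {w : E3} {a : ℝ} (ha : 0 ≤ a) {x : E3} (hx : x ∈ boxAt w a) :
    dist x w ≤ Real.sqrt 3 * a := by
  have hcoord : ∀ i, dist (x i) (w i) ^ 2 ≤ a ^ 2 := by
    intro i
    have h := hx i
    rw [Real.dist_eq, sq_abs]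
    by_cases hc : w i ≤ 1/2 <;> simp only [hc, if_true, if_false] at h <;>
      cases' h with hA hB <;> nlinarith
  rw [EuclideanSpace.dist_eq]
  have hsum : ∑ i, dist (x i) (w i) ^ 2 ≤ 3 * a ^ 2 := by
    calc ∑ i, dist (x i) (w i) ^ 2 ≤ ∑ _i : Fin 3, a ^ 2 := Finset.sum_le_sum fun i _ => hcoord i
    _ = 3 * a ^ 2 := by norm_num
  calc √(∑ i, dist (x i) (w i) ^ 2) ≤ √(3 * a ^ 2) := Real.sqrt_le_sqrt hsum
  _ = √3 * a := by rw [Real.sqrt_mul (by norm_num), Real.sqrt_sq ha]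

-- Lemma C : decrease bound
lemma quantE_insert_le {W : Finset E3} (hW : W.Nonempty) {w : E3} (hwQ : w ∈ Qcube) {t : ℝ}
    (ht0 : 0 < t) (ht2 : t ≤ 2) (htw : t ≤ infDist w (↑W : Set E3)) :
    quantE (insert w W) ≤ quantE W - t ^ 5 / 512 := by
  set B := boxAt w (t/4) with hBdef
  have ha0 : (0:ℝ) ≤ t/4 := by linarith
  have hBm : MeasurableSet B := (isClosed_boxAt w (t/4)).measurableSet
  have hBQ : B ⊆ Qcube := boxAt_subset hwQ ha0 (by linarith)
  have hsub : (↑W : Set E3) ⊆ (↑(insert w W) : Set E3) := by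
    intro z hz; simp only [Finset.coe_insert, Set.mem_insert_iff]; right; exact_mod_cast hz
  have hWne : (↑W : Set E3).Nonempty := by exact_mod_cast hW.to_set
  have hs3 : Real.sqrt 3 ≤ 7/4 := by
    rw [show (7:ℝ)/4 = √((7/4)^2) from (Real.sqrt_sq (by norm_num)).symm]
    apply Real.sqrt_le_sqrt; norm_num
  have key : ∀ x ∈ Qcube, infDist x (↑(insert w W) : Set E3) ^ 2 ≤
      infDist x (↑W : Set E3) ^ 2 + B.indicator (fun _ => -(t^2/8)) x := by
    intro x _
    by_cases hx : x ∈ B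
    · rw [Set.indicator_of_mem hx]
      have hdq : dist x w ≤ √3 * (t/4) := boxAt_dist ha0 hx
      have hZ : infDist x (↑(insert w W) : Set E3) ≤ √3 * (t/4) := by
        refine le_trans (infDist_le_dist_of_mem ?_) hdq
        simp [Finset.coe_insert]
      have hZ0 : (0:ℝ) ≤ infDist x (↑(insert w W) : Set E3) := infDist_nonneg
      have hWlow : t - √3 * (t/4) ≤ infDist x (↑W : Set E3) := by
        have lip : infDist w (↑W : Set E3) ≤ infDist x (↑W : Set E3) + dist w x :=
          infDist_le_infDist_add_dist
        rw [dist_comm] at lip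
        linarith
      have hW0 : (0:ℝ) ≤ t - √3 * (t/4) := by nlinarith [Real.sqrt_nonneg 3]
      have hsq3 : (√3) ^ 2 = 3 := Real.sq_sqrt (by norm_num)
      nlinarith [sq_nonneg (infDist x (↑W : Set E3))]
    · rw [Set.indicator_of_notMem hx, add_zero]
      have : infDist x (↑(insert w W) : Set E3) ≤ infDist x (↑W : Set E3) :=
        infDist_le_infDist_of_subset hsub hWne
      exact pow_le_pow_left₀ infDist_nonneg this 2
  have h := MeasureTheory.setIntegral_mono_on (integrableOn_infDistSq _)
    ((integrableOn_infDistSq (↑W : Set E3)).add (integrableOn_indicator_cell _ hBm _))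
    measurableSet_Qcube key
  simp only [Pi.add_apply] at h
  rw [MeasureTheory.integral_add (integrableOn_infDistSq _) (integrableOn_indicator_cell _ hBm _),
    integral_indicator_cell _ hBm hBQ, volume_boxAt w ha0,
    ENNReal.toReal_ofReal (by positivity)] at h
  calc quantE (insert w W) ≤ quantE W + -(t^2/8) * (t/4)^3 := h
  _ = quantE W - t ^ 5 / 512 := by ring


lemma sqrt3_le : √3 ≤ 7/4 := by
  rw [show (7:ℝ)/4 = √((7/4)^2) from (Real.sqrt_sq (by norm_num)).symm]
  apply Real.sqrt_le_sqrt; norm_num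

lemma sep_le_2R {Y : Finset E3} (hYQ : (↑Y : Set E3) ⊆ Qcube) {y : E3} (hy : y ∈ Y)
    (h2 : 2 ≤ Y.card) {R : ℝ} (hR : ∀ x ∈ Qcube, infDist x (↑Y : Set E3) ≤ R) :
    infDist y (↑(Y.erase y) : Set E3) ≤ 2 * R := by
  have hyQ : y ∈ Qcube := hYQ (by exact_mod_cast hy)
  have hR0 : 0 ≤ R := le_trans (by rw [infDist_zero_of_mem (by exact_mod_cast hy)]) (hR y hyQ)
  have hEne := erase_nonempty h2 hy
  rcases le_or_gt (√3/2) R with hc | hc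
  · obtain ⟨z, hz⟩ := hEne
    have hzY : z ∈ Y := Finset.mem_of_mem_erase hz
    calc infDist y (↑(Y.erase y) : Set E3) ≤ dist y z := infDist_le_dist_of_mem (by exact_mod_cast hz)
    _ ≤ √3 := dist_le_sqrt3 hyQ (hYQ (by exact_mod_cast hzY))
    _ ≤ 2 * R := by linarith
  · by_contra hcon
    push_neg at hcon
    set d := infDist y (↑(Y.erase y) : Set E3) with hd
    set ε : ℝ := min ((d - 2*R)/2) ((√3/2 - R)/2) with hε
    have hε0 : 0 < ε := lt_min (by linarith) (by linarith)
    set c : E3 := WithLp.toLp 2 (fun i => if y i ≤ 1/2 then (1:ℝ) else 0) with hc'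
    have hcQ : c ∈ Qcube := by
      intro i
      show (0:ℝ) ≤ (if y i ≤ 1/2 then 1 else 0) ∧ (if y i ≤ 1/2 then (1:ℝ) else 0) ≤ 1
      by_cases h : y i ≤ 1/2
      · rw [if_pos h]; norm_num
      · rw [if_neg h]; norm_num
    have hcoord : ∀ i, (1/2 : ℝ) ≤ dist (y i) (c i) := by
      intro i
      have h1 := (hyQ i).1; have h2' := (hyQ i).2
      show (1/2 : ℝ) ≤ dist (y i) (if y i ≤ 1/2 then 1 else 0)
      by_cases h : y i ≤ 1/2
      · rw [if_pos h, Real.dist_eq, abs_of_nonpos (by linarith)]; linarith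
      · rw [if_neg h, Real.dist_eq, abs_of_nonneg (by linarith)]; linarith
    set h := dist y c with hhd
    have hh : √3/2 ≤ h := by
      rw [hhd, EuclideanSpace.dist_eq, show √3/2 = √(3/4) by
        rw [show (3:ℝ)/4 = 3 * (1/2)^2 by norm_num, Real.sqrt_mul (by norm_num), Real.sqrt_sq (by norm_num)]; ring]
      apply Real.sqrt_le_sqrt
      calc (3:ℝ)/4 = ∑ _i : Fin 3, ((1/2 : ℝ))^2 := by norm_num
      _ ≤ ∑ i, dist (y i) (c i) ^ 2 := Finset.sum_le_sum fun i _ =>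
            pow_le_pow_left₀ (by norm_num) (hcoord i) 2
    have hh0 : 0 < h := by nlinarith [Real.sqrt_nonneg 3, Real.sq_sqrt (show (0:ℝ) ≤ 3 by norm_num)]
    have hRe : R + ε ≤ h := by
      have : ε ≤ (√3/2 - R)/2 := min_le_right _ _
      linarith
    set θ : ℝ := (R + ε)/h with hθ
    have hθ0 : 0 ≤ θ := div_nonneg (by linarith) hh0.le
    have hθ1 : θ ≤ 1 := (div_le_one hh0).2 hRe
    set p : E3 := y + θ • (c - y) with hp
    have hpQ : p ∈ Qcube := by
      intro i
      have : p i = (1 - θ) * y i + θ * c i := by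
        simp only [hp, PiLp.add_apply, PiLp.smul_apply, PiLp.sub_apply, smul_eq_mul]; ring
      rw [this]
      have h1 := (hyQ i).1; have h2' := (hyQ i).2
      have h3 := (hcQ i).1; have h4 := (hcQ i).2
      constructor <;> nlinarith
    have hdp : dist p y = R + ε := by
      rw [hp, dist_eq_norm, add_sub_cancel_left, norm_smul, Real.norm_of_nonneg hθ0,
        show ‖c - y‖ = dist c y from (dist_eq_norm c y).symm, dist_comm c y, ← hhd, hθ]
      field_simp
    obtain ⟨z, hz, he⟩ := exists_nearest Y ⟨y, hy⟩ p
    have hpz : dist p z ≤ R := he ▸ hR p hpQ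
    have hzy : z ≠ y := by
      rintro rfl
      rw [hdp] at hpz; linarith
    have : d ≤ dist y z := infDist_le_dist_of_mem (by exact_mod_cast Finset.mem_erase.2 ⟨hzy, hz⟩)
    have hchain : d ≤ 2*R + ε := by
      calc d ≤ dist y z := this
      _ ≤ dist y p + dist p z := dist_triangle y p z
      _ ≤ (R + ε) + R := by rw [dist_comm y p]; exact add_le_add (le_of_eq hdp) hpz
      _ = 2*R + ε := by ring
    have : ε ≤ (d - 2*R)/2 := min_le_left _ _
    linarith

lemma cell_dist_bound {Y : Finset E3} (hYQ : (↑Y : Set E3) ⊆ Qcube) {y : E3} (hy : y ∈ Y)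
    (h2 : 2 ≤ Y.card) {R : ℝ} (hR : ∀ x ∈ Qcube, infDist x (↑Y : Set E3) ≤ R) :
    ∀ x ∈ vorCell Y y, infDist x (↑(Y.erase y) : Set E3) ≤ 3 * R := by
  intro x hx
  have hxy : dist x y ≤ R := by
    rw [← infDist_eq_on_cell hy hx]; exact hR x hx.1
  obtain ⟨z₀, hz₀, hez⟩ := exists_nearest (Y.erase y) (erase_nonempty h2 hy) y
  have hd := sep_le_2R hYQ hy h2 hR
  rw [hez] at hd
  calc infDist x (↑(Y.erase y) : Set E3) ≤ dist x z₀ :=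
        infDist_le_dist_of_mem (by exact_mod_cast hz₀)
  _ ≤ dist x y + dist y z₀ := dist_triangle x y z₀
  _ ≤ R + 2 * R := add_le_add hxy hd
  _ = 3 * R := by ring


lemma zero_mem_Qcube : (0 : E3) ∈ Qcube := by
  intro i
  show (0 : E3) i ∈ Set.Icc (0:ℝ) 1
  norm_num [Set.mem_Icc]

-- Lemma E: far point
lemma exists_far_point (Y : Finset E3) (hYne : Y.Nonempty) {r : ℝ} (hr : 0 < r)
    (hcov : (Y.card : ℝ) * (8 * r ^ 3) < 1) :
    ∃ x₀ ∈ Qcube, r ≤ infDist x₀ (↑Y : Set E3) := by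
  by_contra hcon
  push_neg at hcon
  have hsub : Qcube ⊆ ⋃ z ∈ Y, {x : E3 | ∀ i, x i ∈ Set.Icc (z i - r) ((z i - r) + 2*r)} := by
    intro x hx
    obtain ⟨z, hz, he⟩ := exists_nearest Y hYne x
    have hdz : dist x z < r := he ▸ hcon x hx
    refine Set.mem_biUnion hz fun i => ?_
    have := le_trans (dist_coord_le x z i) hdz.le
    rw [Real.dist_eq] at this
    constructor <;> [skip; skip] <;> cases' abs_le.1 this with hA hB <;> linarith
  have hvol : (1 : ENNReal) ≤ ∑ _z ∈ Y, ENNReal.ofReal ((2*r)^3) := by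
    calc (1 : ENNReal) = volume Qcube := volume_Qcube.symm
    _ ≤ volume (⋃ z ∈ Y, {x : E3 | ∀ i, x i ∈ Set.Icc (z i - r) ((z i - r) + 2*r)}) :=
        measure_mono hsub
    _ ≤ ∑ z ∈ Y, volume {x : E3 | ∀ i, x i ∈ Set.Icc (z i - r) ((z i - r) + 2*r)} :=
        measure_biUnion_finset_le Y _
    _ = ∑ _z ∈ Y, ENNReal.ofReal ((2*r)^3) :=
        Finset.sum_congr rfl fun z _ => volume_box (fun i => z i - r) (2*r) (by linarith)
  rw [Finset.sum_const, nsmul_eq_mul] at hvol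
  have : (1 : ENNReal) ≤ ENNReal.ofReal ((Y.card : ℝ) * (2*r)^3) := by
    rwa [ENNReal.ofReal_mul (by positivity), ENNReal.ofReal_natCast]
  rw [ENNReal.one_le_ofReal] at this
  nlinarith

-- Lemma F: small cell
lemma exists_small_cell {Y : Finset E3} (hYQ : (↑Y : Set E3) ⊆ Qcube) (hYne : Y.Nonempty) :
    ∃ y ∈ Y, (volume (vorCell Y y)).toReal ≤ 1 / Y.card := by
  have hdisj : (↑Y : Set E3).Pairwise (Function.onFun (AEDisjoint volume) fun y => vorCell Y y) := by
    intro a ha b hb hab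
    have hsub : vorCell Y a ∩ vorCell Y b ⊆ (AffineSubspace.perpBisector a b : Set E3) := by
      rintro x ⟨hxa, hxb⟩
      rw [SetLike.mem_coe, AffineSubspace.mem_perpBisector_iff_dist_eq]
      exact le_antisymm (hxa.2 b (by exact_mod_cast hb)) (hxb.2 a (by exact_mod_cast ha))
    refine measure_mono_null hsub (Measure.addHaar_affineSubspace volume _ ?_)
    intro htop
    apply hab
    have : a ∈ AffineSubspace.perpBisector a b := htop ▸ AffineSubspace.mem_top ℝ _ a
    rw [AffineSubspace.mem_perpBisector_iff_dist_eq, dist_self] at this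
    exact (dist_eq_zero.1 this.symm).symm ▸ rfl
  have hsum : ∑ z ∈ Y, volume (vorCell Y z) ≤ 1 := by
    rw [← measure_biUnion_finset₀ hdisj fun z _ =>
      (isClosed_vorCell Y z).measurableSet.nullMeasurableSet]
    exact le_trans (measure_mono (Set.iUnion₂_subset fun z _ => vorCell_subset Y z))
      volume_Qcube.le
  have hfin : ∀ z ∈ Y, volume (vorCell Y z) ≠ ⊤ :=
    fun z _ => ne_top_of_le_ne_top (by norm_num)
      (le_trans (measure_mono (vorCell_subset Y z)) volume_Qcube.le)
  have hsumR : ∑ z ∈ Y, (volume (vorCell Y z)).toReal ≤ 1 := by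
    rw [← ENNReal.toReal_sum hfin]
    exact ENNReal.toReal_le_of_le_ofReal zero_le_one (by simpa using hsum)
  have hcard0 : (0:ℝ) < Y.card := by exact_mod_cast Finset.card_pos.2 hYne
  have : ∑ z ∈ Y, (volume (vorCell Y z)).toReal ≤ ∑ _z ∈ Y, 1 / (Y.card : ℝ) := by
    rw [Finset.sum_const, nsmul_eq_mul]
    field_simp
    exact hsumR
  exact Finset.exists_le_of_sum_le hYne this

-- main swap inequality
lemma main_ineq {n : ℕ} (hn2 : 2 ≤ n) {Y : Finset E3} (hY : IsMinimizer n Y) {y : E3}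
    (hy : y ∈ Y) {w : E3} (hwQ : w ∈ Qcube) {r M : ℝ} (hr0 : 0 < r) (hr2 : r ≤ 2)
    (hrw : r ≤ infDist w (↑Y : Set E3))
    (hM : ∀ x ∈ vorCell Y y, infDist x (↑(Y.erase y) : Set E3) ≤ M) :
    r ^ 5 / 512 ≤ M ^ 2 * (volume (vorCell Y y)).toReal := by
  obtain ⟨hYQ, hcard, hmin⟩ := hY
  have h2 : 2 ≤ Y.card := hcard ▸ hn2
  have hWne : (Y.erase y).Nonempty := erase_nonempty h2 hy
  have hwY : w ∉ Y := by
    intro hw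
    rw [infDist_zero_of_mem (by exact_mod_cast hw)] at hrw
    linarith
  have hwW : w ∉ Y.erase y := fun hw => hwY (Finset.mem_of_mem_erase hw)
  have hZcard : (insert w (Y.erase y)).card = n := by
    rw [Finset.card_insert_of_notMem hwW, Finset.card_erase_of_mem hy]
    omega
  have hZQ : (↑(insert w (Y.erase y)) : Set E3) ⊆ Qcube := by
    rw [Finset.coe_insert]
    rintro z (rfl | hz)
    · exact hwQ
    · exact hYQ (by exact_mod_cast Finset.mem_of_mem_erase (by exact_mod_cast hz))
  have hmin' : quantE Y ≤ quantE (insert w (Y.erase y)) := hmin _ hZQ hZcard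
  have hrw' : r ≤ infDist w (↑(Y.erase y) : Set E3) :=
    le_trans hrw (infDist_le_infDist_of_subset
      (by exact_mod_cast Finset.coe_subset.2 (Finset.erase_subset y Y))
      (by exact_mod_cast hWne.to_set))
  have hC := quantE_insert_le hWne hwQ hr0 hr2 hrw'
  have hB := quantE_erase_le hy h2 hM
  linarith

lemma const_bound : omega3 * Gamma5 ^ 3 ≤ (9/20 : ℝ) ^ 5 / 1281024 := by
  have hpi1 : Real.pi ≤ 3.15 := Real.pi_lt_d2.le
  have hpi2 : 3 < Real.pi := Real.pi_gt_three
  have hom1 : (1:ℝ) ≤ omega3 := by rw [omega3]; linarith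
  have hom0 : (0:ℝ) ≤ omega3 := by linarith
  have homU : omega3 ≤ 21/5 := by rw [omega3]; linarith
  have hG1a : (0:ℝ) ≤ Gamma1 := by
    rw [Gamma1]
    positivity
  have hG1b : Gamma1 ≤ 1/40 := by
    rw [Gamma1]
    have : ((2/5 : ℝ)) ^ ((2:ℝ)/3) ≤ 1 := Real.rpow_le_one (by norm_num) (by norm_num) (by norm_num)
    linarith
  have ha1 : omega3 ^ (-(1:ℝ)/5) ≤ 1 :=
    Real.rpow_le_one_of_one_le_of_nonpos hom1 (by norm_num)
  have ha0 : (0:ℝ) ≤ omega3 ^ (-(1:ℝ)/5) := Real.rpow_nonneg hom0 _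
  have hb0 : (0:ℝ) ≤ Gamma1 ^ ((1:ℝ)/5) := Real.rpow_nonneg hG1a _
  have hb1 : Gamma1 ^ ((1:ℝ)/5) ≤ 12/25 := by
    have key : ((12:ℝ)/25) = ((12/25 : ℝ) ^ (5:ℕ)) ^ ((1:ℝ)/5) := by
      rw [← Real.rpow_natCast ((12:ℝ)/25) 5, ← Real.rpow_mul (by norm_num)]
      norm_num
    rw [key]
    exact Real.rpow_le_rpow hG1a (by nlinarith) (by norm_num)
  have hG3a : (0:ℝ) ≤ Gamma3 := mul_nonneg ha0 hb0
  have hG3b : Gamma3 ≤ 12/25 := by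
    rw [Gamma3]
    calc omega3 ^ (-(1:ℝ)/5) * Gamma1 ^ ((1:ℝ)/5) ≤ 1 * (12/25) := by
          exact mul_le_mul ha1 hb1 hb0 zero_le_one
    _ = 12/25 := one_mul _
  have hsq : (2 ^ 4 * 3 ^ 3 : ℝ) / (5 ^ 2 * 10 ^ 3) = 54/3125 := by norm_num
  have hs1 : (1:ℝ) ≤ Real.sqrt (1 + (2 ^ 4 * 3 ^ 3 : ℝ) / (5 ^ 2 * 10 ^ 3)) := by
    rw [Real.one_le_sqrt]; rw [hsq]; norm_num
  have hs2 : Real.sqrt (1 + (2 ^ 4 * 3 ^ 3 : ℝ) / (5 ^ 2 * 10 ^ 3)) ≤ 1 + 27/3125 := by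
    rw [Real.sqrt_le_left (by norm_num)]
    rw [hsq]; norm_num
  have hG5a : (0:ℝ) ≤ Gamma5 := by
    rw [Gamma5]
    have : (0:ℝ) ≤ Real.sqrt (1 + (2 ^ 4 * 3 ^ 3 : ℝ) / (5 ^ 2 * 10 ^ 3)) - 1 := by linarith
    positivity
  have hG5b : Gamma5 ≤ 324/312500 := by
    rw [Gamma5]
    calc (1/4 : ℝ) * (Real.sqrt (1 + (2 ^ 4 * 3 ^ 3 : ℝ) / (5 ^ 2 * 10 ^ 3)) - 1) * Gamma3
        ≤ (1/4) * (27/3125) * (12/25) := by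
          apply mul_le_mul _ hG3b hG3a
          · nlinarith
          · nlinarith
    _ = 324/312500 := by norm_num
  have hG5c : Gamma5 ^ 3 ≤ (324/312500 : ℝ)^3 := pow_le_pow_left₀ hG5a hG5b 3
  have hG5d : (0:ℝ) ≤ Gamma5 ^ 3 := by positivity
  calc omega3 * Gamma5 ^ 3 ≤ (21/5) * ((324/312500:ℝ)^3) := by nlinarith
  _ ≤ (9/20 : ℝ) ^ 5 / 1281024 := by norm_num

set_option maxHeartbeats 1000000 in
theorem stmt_4 (n : ℕ) (hn : 1 ≤ n) (Y : Finset E3) (hY : IsMinimizer n Y)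
    (y : E3) (hyY : y ∈ Y) :
    (volume (vorCell Y y)).toReal ≥ omega3 * Gamma5 ^ 3 * (n : ℝ)⁻¹ := by
  have hconst : omega3 * Gamma5 ^ 3 ≤ (9/20 : ℝ) ^ 5 / 1281024 := const_bound
  have hYQ := hY.1
  have hcard := hY.2.1
  rcases eq_or_lt_of_le hn with h1 | hn2
  · -- n = 1 : the cell is the whole cube
    have hY1 : Y = {y} := by
      rw [Finset.eq_singleton_iff_unique_mem]
      refine ⟨hyY, fun z hz => ?_⟩
      by_contra hzy
      have : 2 ≤ Y.card := Finset.one_lt_card.2 ⟨z, hz, y, hyY, hzy⟩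
      omega
    have hcell : vorCell Y y = Qcube := by
      ext x
      constructor
      · exact fun hx => hx.1
      · intro hx
        refine ⟨hx, fun z hz => ?_⟩
        rw [hY1, Finset.mem_singleton] at hz
        rw [hz]
    rw [hcell, volume_Qcube]
    have : ((1:ENNReal)).toReal = 1 := by norm_num
    rw [this, ge_iff_le, ← h1]
    push_cast
    calc omega3 * Gamma5 ^ 3 * (1:ℝ)⁻¹ = omega3 * Gamma5 ^ 3 := by norm_num
    _ ≤ (9/20 : ℝ) ^ 5 / 1281024 := hconst
    _ ≤ 1 := by norm_num
  · -- n ≥ 2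
    have hn2' : 2 ≤ n := hn2
    have h2 : 2 ≤ Y.card := hcard ▸ hn2'
    have hYne : Y.Nonempty := Finset.card_pos.1 (by omega)
    have hn0 : (0:ℝ) < n := by positivity
    set m : ℝ := (n:ℝ) ^ (-(1:ℝ)/3) with hm
    have hm0 : 0 < m := Real.rpow_pos_of_pos hn0 _
    have hm3 : m ^ 3 = (n:ℝ)⁻¹ := by
      rw [hm, ← Real.rpow_natCast ((n:ℝ) ^ (-(1:ℝ)/3)) 3, ← Real.rpow_mul hn0.le]
      norm_num
      exact (Real.rpow_neg_one _) ▸ (by rw [show (-1 : ℝ) = -1 from rfl, Real.rpow_neg_one])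
    have hm1 : m ≤ 1 := Real.rpow_le_one_of_one_le_of_nonpos (by exact_mod_cast hn) (by norm_num)
    set r : ℝ := (9/20) * m with hr
    have hr0 : 0 < r := by positivity
    have hr2 : r ≤ 2 := by nlinarith
    -- far point
    have hcov : (Y.card : ℝ) * (8 * r ^ 3) < 1 := by
      rw [hcard]
      have : r ^ 3 = (729/8000) * (n:ℝ)⁻¹ := by
        rw [hr]; rw [mul_pow, hm3]; norm_num
      rw [this]
      rw [show (n:ℝ) * (8 * ((729/8000) * (n:ℝ)⁻¹)) = (729/1000) * ((n:ℝ) * (n:ℝ)⁻¹) by ring,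
        mul_inv_cancel₀ (ne_of_gt hn0)]
      norm_num
    obtain ⟨x₀, hx₀Q, hx₀⟩ := exists_far_point Y hYne hr0 hcov
    -- max of infDist
    obtain ⟨xs, hxsQ, hxsmax⟩ := isCompact_Qcube.exists_isMaxOn ⟨0, zero_mem_Qcube⟩
      ((continuous_infDist_pt (↑Y : Set E3)).continuousOn)
    set R : ℝ := infDist xs (↑Y : Set E3) with hR
    have hRmax : ∀ x ∈ Qcube, infDist x (↑Y : Set E3) ≤ R := fun x hx => hxsmax hx
    have hRr : r ≤ R := le_trans hx₀ (hRmax x₀ hx₀Q)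
    have hR0 : 0 < R := lt_of_lt_of_le hr0 hRr
    have hR2 : R ≤ 2 := by
      obtain ⟨z, hz, he⟩ := exists_nearest Y hYne xs
      rw [hR, he]
      calc dist xs z ≤ √3 := dist_le_sqrt3 hxsQ (hYQ (by exact_mod_cast hz))
      _ ≤ 7/4 := sqrt3_le
      _ ≤ 2 := by norm_num
    -- R bound via smallest cell
    obtain ⟨y', hy', hvol'⟩ := exists_small_cell hYQ hYne
    have hMy' := cell_dist_bound hYQ hy' h2 hRmax
    have part3 := main_ineq hn2' hY hy' hxsQ hR0 hR2 (le_refl R) hMy'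
    have hvol'' : (volume (vorCell Y y')).toReal ≤ 1 / n := by rw [← hcard]; exact hvol'
    have hvol0 : (0:ℝ) ≤ (volume (vorCell Y y')).toReal := ENNReal.toReal_nonneg
    have hR3 : R ^ 3 ≤ 4608 / n := by
      have h9 : (3*R)^2 * (volume (vorCell Y y')).toReal ≤ 9 * R^2 * (1/n) := by nlinarith
      have hfin : R^5 / 512 ≤ 9 * R^2 * (1/n) := le_trans part3 h9
      have hR2pos : 0 < R^2 := by positivity
      have e : (4608/(n:ℝ)) * R^2 = 512 * (9 * R^2 * (1/(n:ℝ))) := by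
        rw [div_mul_eq_mul_div, mul_comm]
        field_simp
        ring
      have hstep : R^3 * R^2 ≤ (4608/(n:ℝ)) * R^2 := by
        rw [show R^3*R^2 = R^5 by ring, e]
        linarith
      exact le_of_mul_le_mul_right hstep hR2pos
    -- R^2 ≤ 278 m^2
    have hRsq : R ^ 2 ≤ 278 * m ^ 2 := by
      have h6 : (R^2)^3 ≤ (278 * m^2)^3 := by
        have e1 : (R^2)^3 = (R^3)^2 := by ring
        have e2 : (278*m^2)^3 = 21484952 * (m^3)^2 := by ring
        rw [e1, e2, hm3]
        have hcube : (R^3)^2 ≤ ((4608:ℝ)/n)^2 :=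
          pow_le_pow_left₀ (pow_pos hR0 3).le hR3 2
        have e3 : ((4608:ℝ)/n)^2 = 21233664 * ((n:ℝ)⁻¹)^2 := by
          rw [div_eq_mul_inv, mul_pow]
          norm_num
        calc (R^3)^2 ≤ ((4608:ℝ)/n)^2 := hcube
        _ = 21233664 * ((n:ℝ)⁻¹)^2 := e3
        _ ≤ 21484952 * ((n:ℝ)⁻¹)^2 := by nlinarith [sq_nonneg ((n:ℝ)⁻¹)]
      have h278 : (0:ℝ) ≤ 278 * m^2 := by positivity
      exact le_of_pow_le_pow_left₀ (by norm_num) h278 h6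
    -- final swap at the given cell
    have hMy := cell_dist_bound hYQ hyY h2 hRmax
    have part4 := main_ineq hn2' hY hyY hx₀Q hr0 hr2 hx₀ hMy
    set v : ℝ := (volume (vorCell Y y)).toReal with hv
    have hv0 : (0:ℝ) ≤ v := ENNReal.toReal_nonneg
    -- r^5/512 ≤ 9 R² v ≤ 9·278 m² v
    have hkey : r^5 / 512 ≤ 2502 * m^2 * v := by
      have : (3*R)^2 * v ≤ 9 * (278 * m^2) * v := by nlinarith
      calc r^5/512 ≤ (3*R)^2 * v := part4
      _ ≤ 9 * (278*m^2) * v := this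
      _ = 2502 * m^2 * v := by ring
    have hr5 : r^5 = (9/20:ℝ)^5 * m^2 * (n:ℝ)⁻¹ := by
      rw [hr, mul_pow, show m^5 = m^2 * m^3 by ring, hm3]
      ring
    have hm2pos : 0 < m^2 := by positivity
    have hfinal : (9/20:ℝ)^5 / 1281024 * (n:ℝ)⁻¹ ≤ v := by
      have h1 : (9/20:ℝ)^5 * m^2 * (n:ℝ)⁻¹ / 512 ≤ 2502 * m^2 * v := by
        rw [← hr5]
        exact hkey
      have e : (9/20:ℝ)^5 * m^2 * (n:ℝ)⁻¹ / 512
          = 2502 * (((9/20:ℝ)^5 / 1281024 * (n:ℝ)⁻¹) * m^2) := by ring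
      have e2 : 2502 * m^2 * v = 2502 * (v * m^2) := by ring
      rw [e, e2] at h1
      have h2' : ((9/20:ℝ)^5 / 1281024 * (n:ℝ)⁻¹) * m^2 ≤ v * m^2 := by linarith
      exact le_of_mul_le_mul_right h2' hm2pos
    rw [ge_iff_le]
    calc omega3 * Gamma5 ^ 3 * (n:ℝ)⁻¹ ≤ (9/20:ℝ)^5 / 1281024 * (n:ℝ)⁻¹ := by
          apply mul_le_mul_of_nonneg_right hconst (by positivity)
    _ ≤ v := hfinal
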